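/- Let S be a binary rooted tree whose root has children subtrees S_ℓ and S_r. Then the Hasse digraph D(S) of the lattice of root ancestral configurations of S is isomorphic to the cartesian product of digraphs D̂(S_ℓ) □ D̂(S_r), where D̂(T) denotes the digraph D(T) with one new maximal vertex appended by a single edge from the old maximal vertex (and D̂ of the empty digraph is a single vertex). -/

import Mathlib

/-- Binary rooted trees (leaf labels abstracted away; leaves are identified
by their positions, encoded as lists of booleans). -/
inductive BTree : Type
  | leaf : BTree
  | node : BTree → BTree → BTree
  deriving DecidableEq

namespace BTree

/-- A position in a binary tree: a path from the root, `false` = left, `true` = right. -/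
abbrev Pos := List Bool

/-- The subtree rooted at a position (junk value `leaf` below a leaf). -/
def subtreeAt : BTree → Pos → BTree
  | t, [] => t
  | leaf, _ :: _ => leaf
  | node l _, false :: p => subtreeAt l p
  | node _ r, true :: p => subtreeAt r p

/-- `p` is a valid position (node) of the tree. -/
def isValidPos : BTree → Pos → Prop
  | _, [] => True
  | leaf, _ :: _ => False
  | node l _, false :: p => isValidPos l p
  | node _ r, true :: p => isValidPos r p

/-- The set of positions of the leaves of a tree. -/
def leafPositions : BTree → Finset Pos
  | leaf => {([] : Pos)}
  | node l r =>
      (leafPositions l).image (false :: ·) ∪ (leafPositions r).image (true :: ·)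

/-- The number of leaves of a tree. -/
def numLeaves (t : BTree) : ℕ := (leafPositions t).card

/-- The set of positions of the internal (non-leaf) nodes of a tree. -/
def internalPos : BTree → Finset Pos
  | leaf => ∅
  | node l r =>
      insert ([] : Pos)
        ((internalPos l).image (false :: ·) ∪ (internalPos r).image (true :: ·))

/-- A root ancestral configuration of `S`: an antichain of non-root nodes of `S`
whose descendant-leaf sets partition the leaf set, i.e. a set of valid non-root
positions such that every leaf position has exactly one weak ancestor in the set. -/
def IsConfig (S : BTree) (A : Finset Pos) : Prop :=
  (∀ p ∈ A, isValidPos S p ∧ p ≠ []) ∧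
  ∀ q ∈ leafPositions S, ∃! p, p ∈ A ∧ p <+: q

/-- The partial order on configurations: `ConfigLE A B` (that is, `A ≺ B`) iff `B`
is obtained from `A` by coalescing some (possibly no) pairs of lineages;
equivalently, every node of `A` is a weak descendant of some node of `B`. -/
def ConfigLE (A B : Finset Pos) : Prop :=
  ∀ p ∈ A, ∃ q ∈ B, q <+: p

/-- The covering relation on root ancestral configurations of `S`. -/
def Covers (S : BTree) (A B : Finset Pos) : Prop :=
  IsConfig S A ∧ IsConfig S B ∧ ConfigLE A B ∧ A ≠ B ∧
  ∀ C, IsConfig S C → ConfigLE A C → ConfigLE C B → C = A ∨ C = B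

/-- The maximal root configuration: the two children of the root. -/
def rootConfig : Finset Pos := {[false], [true]}

/-- The number of root ancestral configurations of `S`. -/
noncomputable def numConfigs (S : BTree) : ℕ := Nat.card {A : Finset Pos // IsConfig S A}

/-- A labeled history of `S`: a linear ordering of the internal nodes of `S`
in which every internal node appears after all of its internal descendants. -/
def IsLabHist (S : BTree) (L : List Pos) : Prop :=
  L.Nodup ∧ (∀ p, p ∈ L ↔ p ∈ internalPos S) ∧
  ∀ i j : Fin L.length, L.get i <+: L.get j → (j : ℕ) ≤ (i : ℕ)

/-- The number of labeled histories of `S`. -/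
noncomputable def numHist (S : BTree) : ℕ := Nat.card {L : List Pos // IsLabHist S L}

/-- The caterpillar tree on `n` leaves (`caterpillar 1` is a single leaf). -/
def caterpillar : ℕ → BTree
  | 0 => leaf
  | 1 => leaf
  | n + 2 => node (caterpillar (n + 1)) leaf

end BTree

open BTree

/-- The edge relation of the digraph `D̂(T)`: the covering digraph of the lattice of
root ancestral configurations of `T`, with one new maximal vertex (`none`) appended
by a single edge from the old maximal vertex (the greatest configuration). -/
def hatEdge (T : BTree) :
    Option {A : Finset Pos // IsConfig T A} →
    Option {A : Finset Pos // IsConfig T A} → Prop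
  | some a, some b => Covers T a.val b.val
  | some a, none => ∀ B, IsConfig T B → ConfigLE B a.val
  | none, _ => False

namespace HasseAux
open BTree List Finset

abbrev Cfg (T : BTree) := {A : Finset Pos // IsConfig T A}

lemma prefix_antisymm {p q : Pos} (h1 : p <+: q) (h2 : q <+: p) : p = q :=
  h1.sublist.eq_of_length_le h2.length_le

lemma valid_nil (T : BTree) : isValidPos T [] := by cases T <;> exact trivial

lemma valid_cons {l r : BTree} {b : Bool} {p : Pos} :
    isValidPos (node l r) (b :: p) ↔ isValidPos (cond b r l) p := by
  cases b <;> rfl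

lemma mem_leaf_cons {l r : BTree} {b : Bool} {q : Pos} :
    (b :: q) ∈ leafPositions (node l r) ↔ q ∈ leafPositions (cond b r l) := by
  cases b <;> simp [leafPositions]

lemma leaf_node_cases {l r : BTree} {q : Pos} (h : q ∈ leafPositions (node l r)) :
    ∃ b q', q = b :: q' := by
  simp only [leafPositions, Finset.mem_union, Finset.mem_image] at h
  rcases h with ⟨q', _, rfl⟩ | ⟨q', _, rfl⟩
  · exact ⟨false, q', rfl⟩
  · exact ⟨true, q', rfl⟩

lemma exists_leaf_above : ∀ (T : BTree) (p : Pos), isValidPos T p →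
    ∃ q ∈ leafPositions T, p <+: q := by
  intro T
  induction T with
  | leaf =>
    intro p hp
    cases p with
    | nil => exact ⟨[], by simp [leafPositions], prefix_rfl⟩
    | cons b p => exact absurd hp (by simp [isValidPos])
  | node l r ihl ihr =>
    intro p hp
    cases p with
    | nil =>
      obtain ⟨q, hq, -⟩ := ihl [] (valid_nil l)
      exact ⟨false :: q, mem_leaf_cons.2 hq, List.nil_prefix⟩
    | cons b p =>
      cases b with
      | false =>
        obtain ⟨q, hq, hpq⟩ := ihl p hp
        exact ⟨false :: q, mem_leaf_cons.2 hq, cons_prefix_cons.2 ⟨rfl, hpq⟩⟩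
      | true =>
        obtain ⟨q, hq, hpq⟩ := ihr p hp
        exact ⟨true :: q, mem_leaf_cons.2 hq, cons_prefix_cons.2 ⟨rfl, hpq⟩⟩

lemma config_antichain {S : BTree} {A : Finset Pos} (hA : IsConfig S A)
    {p q : Pos} (hp : p ∈ A) (hq : q ∈ A) (hpq : p <+: q) : p = q := by
  obtain ⟨hv, -⟩ := hA.1 q hq
  obtain ⟨q', hq', hqq'⟩ := exists_leaf_above S q hv
  obtain ⟨p0, -, huniq⟩ := hA.2 q' hq'
  exact (huniq p ⟨hp, hpq.trans hqq'⟩).trans (huniq q ⟨hq, hqq'⟩).symm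

lemma configLE_refl (A : Finset Pos) : ConfigLE A A :=
  fun p hp => ⟨p, hp, prefix_rfl⟩

lemma configLE_antisymm {S : BTree} {A B : Finset Pos} (hA : IsConfig S A)
    (hB : IsConfig S B) (h1 : ConfigLE A B) (h2 : ConfigLE B A) : A = B := by
  have key : ∀ (A B : Finset Pos), IsConfig S A → ConfigLE A B → ConfigLE B A → A ⊆ B := by
    intro A B hA h1 h2 p hp
    obtain ⟨q, hq, hqp⟩ := h1 p hp
    obtain ⟨p', hp', hp'q⟩ := h2 q hq
    have hpp : p' = p := config_antichain hA hp' hp (hp'q.trans hqp)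
    subst hpp
    rw [prefix_antisymm hp'q hqp]
    exact hq
  exact Finset.Subset.antisymm (key A B hA h1 h2) (key B A hB h2 h1)

lemma no_config_leaf {A : Finset Pos} (h : IsConfig BTree.leaf A) : False := by
  obtain ⟨p, ⟨hp, hpre⟩, -⟩ := h.2 [] (by simp [leafPositions])
  exact (h.1 p hp).2 (List.eq_nil_of_prefix_nil hpre)

/-! ### sideSet and glue -/

def sideSet (b : Bool) {T : BTree} : Option (Cfg T) → Finset Pos
  | none => {[b]}
  | some A => A.val.image (b :: ·)

lemma mem_sideSet_none {b : Bool} {T : BTree} {q : Pos} :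
    q ∈ sideSet b (none : Option (Cfg T)) ↔ q = [b] := by simp [sideSet]

lemma mem_sideSet_some {b : Bool} {T : BTree} {A : Cfg T} {q : Pos} :
    q ∈ sideSet b (some A) ↔ ∃ p ∈ A.val, q = b :: p := by
  simp [sideSet, eq_comm]

lemma head_of_mem_sideSet {b : Bool} {T : BTree} {o : Option (Cfg T)} {q : Pos}
    (h : q ∈ sideSet b o) : ∃ p, q = b :: p := by
  cases o with
  | none => exact ⟨[], mem_sideSet_none.1 h⟩
  | some A => obtain ⟨p, -, rfl⟩ := mem_sideSet_some.1 h; exact ⟨p, rfl⟩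

def glue {l r : BTree} (x : Option (Cfg l)) (y : Option (Cfg r)) : Finset Pos :=
  sideSet false x ∪ sideSet true y

/-- Select the component corresponding to side `b`. -/
def pick {l r : BTree} (x : Option (Cfg l)) (y : Option (Cfg r)) :
    ∀ b : Bool, Option (Cfg (cond b r l))
  | false => x
  | true => y

lemma mem_glue {l r : BTree} {x : Option (Cfg l)} {y : Option (Cfg r)} {q : Pos} :
    q ∈ glue x y ↔ q ∈ sideSet false x ∨ q ∈ sideSet true y := Finset.mem_union

lemma cons_mem_glue {l r : BTree} {x : Option (Cfg l)} {y : Option (Cfg r)}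
    {b : Bool} {p : Pos} :
    (b :: p) ∈ glue x y ↔ (b :: p) ∈ sideSet b (pick x y b) := by
  rw [mem_glue]
  cases b with
  | false =>
    simp only [pick]
    constructor
    · rintro (h | h)
      · exact h
      · obtain ⟨p', hp'⟩ := head_of_mem_sideSet h; simp at hp'
    · exact Or.inl
  | true =>
    simp only [pick]
    constructor
    · rintro (h | h)
      · obtain ⟨p', hp'⟩ := head_of_mem_sideSet h; simp at hp'
      · exact h
    · exact Or.inr

lemma sideSet_cover {T : BTree} {b : Bool} (o : Option (Cfg T)) (q : Pos)
    (hq : q ∈ leafPositions T) : ∃! p, p ∈ sideSet b o ∧ p <+: b :: q := by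
  cases o with
  | none =>
    refine ⟨[b], ⟨mem_sideSet_none.2 rfl, ⟨q, rfl⟩⟩, ?_⟩
    rintro p ⟨hp, -⟩
    exact mem_sideSet_none.1 hp
  | some A =>
    obtain ⟨p, ⟨hp, hpre⟩, huniq⟩ := A.2.2 q hq
    refine ⟨b :: p, ⟨mem_sideSet_some.2 ⟨p, hp, rfl⟩, cons_prefix_cons.2 ⟨rfl, hpre⟩⟩, ?_⟩
    rintro p' ⟨hp', hpre'⟩
    obtain ⟨p'', hp'', rfl⟩ := mem_sideSet_some.1 hp'
    rw [cons_prefix_cons] at hpre'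
    rw [huniq p'' ⟨hp'', hpre'.2⟩]

lemma glue_isConfig {l r : BTree} (x : Option (Cfg l)) (y : Option (Cfg r)) :
    IsConfig (node l r) (glue x y) := by
  constructor
  · intro p hp
    have : ∀ b (o : Option (Cfg (cond b r l))), p ∈ sideSet b o →
        isValidPos (node l r) p ∧ p ≠ [] := by
      intro b o h
      cases o with
      | none =>
        rw [mem_sideSet_none] at h; subst h
        exact ⟨valid_cons.2 (valid_nil _), by simp⟩
      | some A =>
        obtain ⟨p', hp', rfl⟩ := mem_sideSet_some.1 h
        exact ⟨valid_cons.2 (A.2.1 p' hp').1, by simp⟩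
    rcases mem_glue.1 hp with h | h
    · exact this false x h
    · exact this true y h
  · intro q0 hq0
    obtain ⟨b, q, rfl⟩ := leaf_node_cases hq0
    have hq : q ∈ leafPositions (cond b r l) := mem_leaf_cons.1 hq0
    obtain ⟨p, ⟨hp, hpre⟩, huniq⟩ := sideSet_cover (b := b) (pick x y b) q hq
    refine ⟨p, ⟨?_, hpre⟩, ?_⟩
    · obtain ⟨p', rfl⟩ := head_of_mem_sideSet hp
      exact cons_mem_glue.2 hp
    · rintro p' ⟨hp', hpre'⟩
      have hne : p' ≠ [] := by
        rintro rfl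
        rcases mem_glue.1 hp' with h | h <;>
          · obtain ⟨p'', hp''⟩ := head_of_mem_sideSet h; simp at hp''
      obtain ⟨b', p'', rfl⟩ := List.exists_cons_of_ne_nil hne
      have hb : b' = b := (cons_prefix_cons.1 hpre').1
      subst hb
      exact huniq _ ⟨cons_mem_glue.1 hp', hpre'⟩

/-! ### strip and split -/

def strip (b : Bool) (A : Finset Pos) : Finset Pos :=
  (A.filter fun p => p.head? = some b).image List.tail

lemma mem_strip {b : Bool} {A : Finset Pos} {p : Pos} :
    p ∈ strip b A ↔ (b :: p) ∈ A := by
  simp only [strip, Finset.mem_image, Finset.mem_filter]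
  constructor
  · rintro ⟨q, ⟨hq, hh⟩, rfl⟩
    cases q with
    | nil => simp at hh
    | cons c t => simp at hh; subst hh; exact hq
  · intro h; exact ⟨b :: p, ⟨h, rfl⟩, rfl⟩

lemma strip_isConfig {l r : BTree} {A : Finset Pos} (h : IsConfig (node l r) A)
    (b : Bool) (hb : [b] ∉ A) : IsConfig (cond b r l) (strip b A) := by
  constructor
  · intro p hp
    have hm := mem_strip.1 hp
    refine ⟨valid_cons.1 (h.1 _ hm).1, ?_⟩
    rintro rfl; exact hb hm
  · intro q hq
    obtain ⟨p0, ⟨hp0, hpre0⟩, huniq⟩ := h.2 (b :: q) (mem_leaf_cons.2 hq)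
    have hne : p0 ≠ [] := (h.1 p0 hp0).2
    obtain ⟨b', p0', rfl⟩ := List.exists_cons_of_ne_nil hne
    obtain ⟨rfl, hpre⟩ := cons_prefix_cons.1 hpre0
    refine ⟨p0', ⟨mem_strip.2 hp0, hpre⟩, ?_⟩
    rintro p1 ⟨hp1, hpre1⟩
    have h2 := huniq (b' :: p1) ⟨mem_strip.1 hp1, cons_prefix_cons.2 ⟨rfl, hpre1⟩⟩
    injection h2

def split {l r : BTree} (b : Bool) (A : Cfg (node l r)) : Option (Cfg (cond b r l)) :=
  if h : [b] ∈ A.val then none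
  else some ⟨strip b A.val, strip_isConfig A.2 b h⟩

lemma cons_mem_sideSet_some {b : Bool} {T : BTree} {A : Cfg T} {p : Pos} :
    (b :: p) ∈ sideSet b (some A) ↔ p ∈ A.val := by
  rw [mem_sideSet_some]
  constructor
  · rintro ⟨p', hp', he⟩
    injection he with _ he'
    rwa [he']
  · intro h; exact ⟨p, h, rfl⟩

lemma singleton_mem_glue_iff {l r : BTree} {x : Option (Cfg l)} {y : Option (Cfg r)}
    {b : Bool} : [b] ∈ glue x y ↔ pick x y b = none := by
  rw [show ([b] : Pos) = b :: [] from rfl, cons_mem_glue]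
  cases pick x y b with
  | none => simp [mem_sideSet_none]
  | some A =>
    simp only [mem_sideSet_some]
    constructor
    · rintro ⟨p, hp, he⟩
      injection he with _ he'
      rw [← he'] at hp
      exact absurd rfl ((A.2.1 [] hp).2)
    · intro h; exact absurd h (by simp)

lemma split_glue {l r : BTree} (x : Option (Cfg l)) (y : Option (Cfg r)) (b : Bool) :
    split b ⟨glue x y, glue_isConfig x y⟩ = pick x y b := by
  unfold split
  cases h : pick x y b with
  | none => rw [dif_pos (singleton_mem_glue_iff.2 h)]
  | some B =>
    rw [dif_neg (fun hm => by rw [singleton_mem_glue_iff.1 hm] at h; cases h)]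
    congr 1
    apply Subtype.ext
    ext p
    rw [mem_strip]
    show (b :: p) ∈ glue x y ↔ p ∈ B.val
    rw [cons_mem_glue, h, cons_mem_sideSet_some]

lemma glue_split {l r : BTree} (A : Cfg (node l r)) :
    glue (split false A) (split true A) = A.val := by
  have hside : ∀ b, pick (split false A) (split true A) b = split b A := by
    intro b; cases b <;> rfl
  ext q
  constructor
  · intro hq
    have : ∀ b (o : Option (Cfg (cond b r l))), o = split b A → q ∈ sideSet b o → q ∈ A.val := by
      intro b o ho h
      obtain ⟨p, rfl⟩ := head_of_mem_sideSet h
      subst ho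
      unfold split at h
      by_cases hm : [b] ∈ A.val
      · rw [dif_pos hm] at h
        rw [mem_sideSet_none] at h
        rw [h]; exact hm
      · rw [dif_neg hm] at h
        rw [cons_mem_sideSet_some] at h
        exact mem_strip.1 h
    rcases mem_glue.1 hq with h | h
    · exact this false _ rfl h
    · exact this true _ rfl h
  · intro hq
    have hne : q ≠ [] := (A.2.1 q hq).2
    obtain ⟨b, p, rfl⟩ := List.exists_cons_of_ne_nil hne
    rw [cons_mem_glue, hside b]
    unfold split
    by_cases hm : [b] ∈ A.val
    · rw [dif_pos hm, mem_sideSet_none]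
      exact (config_antichain A.2 hm hq ⟨p, rfl⟩).symm
    · rw [dif_neg hm, cons_mem_sideSet_some]
      exact mem_strip.2 hq

lemma glue_inj {l r : BTree} {x x' : Option (Cfg l)} {y y' : Option (Cfg r)}
    (h : glue x y = glue x' y') : x = x' ∧ y = y' := by
  have e : (⟨glue x y, glue_isConfig x y⟩ : Cfg (node l r)) =
      ⟨glue x' y', glue_isConfig x' y'⟩ := Subtype.ext h
  constructor
  · have h1 := split_glue x y false
    rw [e, split_glue x' y' false] at h1
    exact h1.symm
  · have h1 := split_glue x y true
    rw [e, split_glue x' y' true] at h1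
    exact h1.symm

/-! ### the order on Option configurations -/

def optLE {T : BTree} : Option (Cfg T) → Option (Cfg T) → Prop
  | _, none => True
  | none, some _ => False
  | some a, some b => ConfigLE a.val b.val

lemma optLE_refl {T : BTree} (o : Option (Cfg T)) : optLE o o := by
  cases o with
  | none => trivial
  | some a => exact configLE_refl a.val

lemma optLE_none_left {T : BTree} {o : Option (Cfg T)} : optLE none o ↔ o = none := by
  cases o with
  | none => simp [optLE]
  | some a => simp [optLE]

lemma optLE_antisymm {T : BTree} {o o' : Option (Cfg T)}
    (h1 : optLE o o') (h2 : optLE o' o) : o = o' := by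
  cases o with
  | none => exact (optLE_none_left.1 h1).symm
  | some a =>
    cases o' with
    | none => exact absurd h2 (by simp [optLE])
    | some b => exact congrArg some (Subtype.ext (configLE_antisymm a.2 b.2 h1 h2))

lemma sideSet_le_iff {T : BTree} {b : Bool} {o o' : Option (Cfg T)} :
    (∀ p ∈ sideSet b o, ∃ q ∈ sideSet b o', q <+: p) ↔ optLE o o' := by
  cases o with
  | none =>
    cases o' with
    | none => exact iff_of_true (fun p hp => ⟨p, hp, prefix_rfl⟩) trivial
    | some B' =>
      refine iff_of_false (fun h => ?_) (by simp [optLE])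
      obtain ⟨q, hq, hqp⟩ := h [b] (mem_sideSet_none.2 rfl)
      obtain ⟨q', hq', rfl⟩ := mem_sideSet_some.1 hq
      have := (cons_prefix_cons.1 hqp).2
      rw [List.prefix_nil] at this
      subst this
      exact (B'.2.1 [] hq').2 rfl
  | some B =>
    cases o' with
    | none =>
      refine iff_of_true (fun p hp => ?_) trivial
      obtain ⟨p', rfl⟩ := head_of_mem_sideSet hp
      exact ⟨[b], mem_sideSet_none.2 rfl, cons_prefix_cons.2 ⟨rfl, List.nil_prefix⟩⟩
    | some B' =>
      show _ ↔ ConfigLE B.val B'.val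
      constructor
      · intro h p hp
        obtain ⟨q, hq, hqp⟩ := h (b :: p) (cons_mem_sideSet_some.2 hp)
        obtain ⟨q', hq', rfl⟩ := mem_sideSet_some.1 hq
        exact ⟨q', hq', (cons_prefix_cons.1 hqp).2⟩
      · intro h p hp
        obtain ⟨p', hp', rfl⟩ := mem_sideSet_some.1 hp
        obtain ⟨q, hq, hqp⟩ := h p' hp'
        exact ⟨b :: q, cons_mem_sideSet_some.2 hq, cons_prefix_cons.2 ⟨rfl, hqp⟩⟩

lemma configLE_glue_iff {l r : BTree} {x x' : Option (Cfg l)} {y y' : Option (Cfg r)} :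
    ConfigLE (glue x y) (glue x' y') ↔ optLE x x' ∧ optLE y y' := by
  constructor
  · intro h
    have key : ∀ b (o o' : Option (Cfg (cond b r l))), o = pick x y b → o' = pick x' y' b →
        ∀ p ∈ sideSet b o, ∃ q ∈ sideSet b o', q <+: p := by
      intro b o o' ho ho' p hp
      obtain ⟨p', rfl⟩ := head_of_mem_sideSet hp
      obtain ⟨q, hq, hqp⟩ := h _ (cons_mem_glue.2 (ho ▸ hp))
      have hqne : q ≠ [] := ((glue_isConfig x' y').1 q hq).2
      obtain ⟨b', q', rfl⟩ := List.exists_cons_of_ne_nil hqne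
      obtain ⟨rfl, -⟩ := cons_prefix_cons.1 hqp
      exact ⟨b' :: q', ho' ▸ cons_mem_glue.1 hq, hqp⟩
    exact ⟨sideSet_le_iff.1 (key false x x' rfl rfl), sideSet_le_iff.1 (key true y y' rfl rfl)⟩
  · rintro ⟨h1, h2⟩ p hp
    rcases mem_glue.1 hp with h | h
    · obtain ⟨q, hq, hqp⟩ := (sideSet_le_iff.2 h1) p h
      exact ⟨q, mem_glue.2 (Or.inl hq), hqp⟩
    · obtain ⟨q, hq, hqp⟩ := (sideSet_le_iff.2 h2) p h
      exact ⟨q, mem_glue.2 (Or.inr hq), hqp⟩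

/-! ### the top configuration -/

lemma rootConfig_isConfig (l r : BTree) : IsConfig (node l r) rootConfig := by
  have : (rootConfig : Finset Pos) = glue (none : Option (Cfg l)) (none : Option (Cfg r)) := by
    simp [rootConfig, glue, sideSet]
  rw [this]
  exact glue_isConfig none none

lemma configLE_rootConfig {l r : BTree} {A : Finset Pos} (h : IsConfig (node l r) A) :
    ConfigLE A rootConfig := by
  intro p hp
  obtain ⟨b, p', rfl⟩ := List.exists_cons_of_ne_nil (h.1 p hp).2
  refine ⟨[b], by cases b <;> simp [rootConfig], ⟨p', rfl⟩⟩

/-! ### the main covering lemma -/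

lemma covers_glue_iff {l r : BTree} (x x' : Option (Cfg l)) (y y' : Option (Cfg r)) :
    Covers (node l r) (glue x y) (glue x' y') ↔
      ((x = x' ∧ hatEdge r y y') ∨ (y = y' ∧ hatEdge l x x')) := by
  constructor
  · rintro ⟨hA, hB, hLE, hne, hmin⟩
    obtain ⟨hx, hy⟩ := configLE_glue_iff.1 hLE
    have hxy : x = x' ∨ y = y' := by
      rcases hmin (glue x' y) (glue_isConfig _ _)
        (configLE_glue_iff.2 ⟨hx, optLE_refl y⟩)
        (configLE_glue_iff.2 ⟨optLE_refl x', hy⟩) with h | h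
      · exact Or.inl (glue_inj h).1.symm
      · exact Or.inr (glue_inj h).2
    rcases hxy with rfl | rfl
    · -- x = x'
      left
      refine ⟨rfl, ?_⟩
      have hyne : y ≠ y' := fun h => hne (by rw [h])
      cases y with
      | none => exact absurd (optLE_none_left.1 hy) (fun h => hyne h.symm)
      | some a =>
        cases y' with
        | some b =>
          show Covers r a.val b.val
          refine ⟨a.2, b.2, hy, fun h => hyne (congrArg some (Subtype.ext h)), ?_⟩
          intro C hC hC1 hC2
          rcases hmin (glue x (some ⟨C, hC⟩)) (glue_isConfig _ _)
            (configLE_glue_iff.2 ⟨optLE_refl x, hC1⟩)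
            (configLE_glue_iff.2 ⟨optLE_refl x, hC2⟩) with h | h
          · exact Or.inl (congrArg Subtype.val (Option.some_injective _ (glue_inj h).2))
          · exact Or.inr (congrArg Subtype.val (Option.some_injective _ (glue_inj h).2))
        | none =>
          show ∀ B, IsConfig r B → ConfigLE B a.val
          cases r with
          | leaf => exact (no_config_leaf a.2).elim
          | node r1 r2 =>
            intro B hB
            rcases hmin (glue x (some ⟨rootConfig, rootConfig_isConfig r1 r2⟩))
              (glue_isConfig _ _)
              (configLE_glue_iff.2 ⟨optLE_refl x, configLE_rootConfig a.2⟩)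
              (configLE_glue_iff.2 ⟨optLE_refl x, trivial⟩) with h | h
            · have h2 := (glue_inj h).2
              have h3 : rootConfig = a.val :=
                congrArg Subtype.val (Option.some_injective _ h2)
              rw [← h3]
              exact configLE_rootConfig hB
            · exact absurd (glue_inj h).2 (by simp)
    · -- y = y'
      right
      refine ⟨rfl, ?_⟩
      have hxne : x ≠ x' := fun h => hne (by rw [h])
      cases x with
      | none => exact absurd (optLE_none_left.1 hx) (fun h => hxne h.symm)
      | some a =>
        cases x' with
        | some b =>
          show Covers l a.val b.val
          refine ⟨a.2, b.2, hx, fun h => hxne (congrArg some (Subtype.ext h)), ?_⟩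
          intro C hC hC1 hC2
          rcases hmin (glue (some ⟨C, hC⟩) y) (glue_isConfig _ _)
            (configLE_glue_iff.2 ⟨hC1, optLE_refl y⟩)
            (configLE_glue_iff.2 ⟨hC2, optLE_refl y⟩) with h | h
          · exact Or.inl (congrArg Subtype.val (Option.some_injective _ (glue_inj h).1))
          · exact Or.inr (congrArg Subtype.val (Option.some_injective _ (glue_inj h).1))
        | none =>
          show ∀ B, IsConfig l B → ConfigLE B a.val
          cases l with
          | leaf => exact (no_config_leaf a.2).elim
          | node l1 l2 =>
            intro B hB
            rcases hmin (glue (some ⟨rootConfig, rootConfig_isConfig l1 l2⟩) y)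
              (glue_isConfig _ _)
              (configLE_glue_iff.2 ⟨configLE_rootConfig a.2, optLE_refl y⟩)
              (configLE_glue_iff.2 ⟨trivial, optLE_refl y⟩) with h | h
            · have h3 : rootConfig = a.val :=
                congrArg Subtype.val (Option.some_injective _ (glue_inj h).1)
              rw [← h3]
              exact configLE_rootConfig hB
            · exact absurd (glue_inj h).1 (by simp)
  · rintro (⟨rfl, he⟩ | ⟨rfl, he⟩)
    · -- x = x', hatEdge r y y'
      cases y with
      | none => exact (he : False).elim
      | some a =>
        cases y' with
        | some b =>
          obtain ⟨hca, hcb, hle, hneq, hm⟩ := (he : Covers r a.val b.val)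
          refine ⟨glue_isConfig _ _, glue_isConfig _ _,
            configLE_glue_iff.2 ⟨optLE_refl x, hle⟩, ?_, ?_⟩
          · intro h
            exact hneq (congrArg Subtype.val (Option.some_injective _ (glue_inj h).2))
          · intro C hC h1 h2
            have hCg : glue (split false ⟨C, hC⟩) (split true ⟨C, hC⟩) = C :=
              glue_split (⟨C, hC⟩ : Cfg (node l r))
            rw [← hCg] at h1 h2 ⊢
            obtain ⟨hx1, hy1⟩ := configLE_glue_iff.1 h1
            obtain ⟨hx2, hy2⟩ := configLE_glue_iff.1 h2
            rw [← optLE_antisymm hx1 hx2]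
            cases hsp : split true (⟨C, hC⟩ : Cfg (node l r)) with
            | none => rw [hsp] at hy2; exact (hy2 : False).elim
            | some c =>
              rw [hsp] at hy1 hy2
              rcases hm c.val c.2 hy1 hy2 with h | h
              · exact Or.inl (congrArg _ (congrArg some (Subtype.ext h)))
              · exact Or.inr (congrArg _ (congrArg some (Subtype.ext h)))
        | none =>
          refine ⟨glue_isConfig _ _, glue_isConfig _ _,
            configLE_glue_iff.2 ⟨optLE_refl x, trivial⟩, ?_, ?_⟩
          · intro h
            exact absurd (glue_inj h).2 (by simp)
          · intro C hC h1 h2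
            have hCg : glue (split false ⟨C, hC⟩) (split true ⟨C, hC⟩) = C :=
              glue_split (⟨C, hC⟩ : Cfg (node l r))
            rw [← hCg] at h1 h2 ⊢
            obtain ⟨hx1, hy1⟩ := configLE_glue_iff.1 h1
            obtain ⟨hx2, hy2⟩ := configLE_glue_iff.1 h2
            rw [← optLE_antisymm hx1 hx2]
            cases hsp : split true (⟨C, hC⟩ : Cfg (node l r)) with
            | none => exact Or.inr rfl
            | some c =>
              rw [hsp] at hy1
              have hc : c.val = a.val := configLE_antisymm c.2 a.2 (he c.val c.2) hy1
              exact Or.inl (congrArg _ (congrArg some (Subtype.ext hc)))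
    · -- y = y', hatEdge l x x'
      cases x with
      | none => exact (he : False).elim
      | some a =>
        cases x' with
        | some b =>
          obtain ⟨hca, hcb, hle, hneq, hm⟩ := (he : Covers l a.val b.val)
          refine ⟨glue_isConfig _ _, glue_isConfig _ _,
            configLE_glue_iff.2 ⟨hle, optLE_refl y⟩, ?_, ?_⟩
          · intro h
            exact hneq (congrArg Subtype.val (Option.some_injective _ (glue_inj h).1))
          · intro C hC h1 h2
            have hCg : glue (split false ⟨C, hC⟩) (split true ⟨C, hC⟩) = C :=
              glue_split (⟨C, hC⟩ : Cfg (node l r))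
            rw [← hCg] at h1 h2 ⊢
            obtain ⟨hx1, hy1⟩ := configLE_glue_iff.1 h1
            obtain ⟨hx2, hy2⟩ := configLE_glue_iff.1 h2
            rw [← optLE_antisymm hy1 hy2]
            cases hsp : split false (⟨C, hC⟩ : Cfg (node l r)) with
            | none => rw [hsp] at hx2; exact (hx2 : False).elim
            | some c =>
              rw [hsp] at hx1 hx2
              rcases hm c.val c.2 hx1 hx2 with h | h
              · exact Or.inl (congrArg (fun z => glue z _) (congrArg some (Subtype.ext h)))
              · exact Or.inr (congrArg (fun z => glue z _) (congrArg some (Subtype.ext h)))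
        | none =>
          refine ⟨glue_isConfig _ _, glue_isConfig _ _,
            configLE_glue_iff.2 ⟨trivial, optLE_refl y⟩, ?_, ?_⟩
          · intro h
            exact absurd (glue_inj h).1 (by simp)
          · intro C hC h1 h2
            have hCg : glue (split false ⟨C, hC⟩) (split true ⟨C, hC⟩) = C :=
              glue_split (⟨C, hC⟩ : Cfg (node l r))
            rw [← hCg] at h1 h2 ⊢
            obtain ⟨hx1, hy1⟩ := configLE_glue_iff.1 h1
            obtain ⟨hx2, hy2⟩ := configLE_glue_iff.1 h2
            rw [← optLE_antisymm hy1 hy2]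
            cases hsp : split false (⟨C, hC⟩ : Cfg (node l r)) with
            | none => exact Or.inr rfl
            | some c =>
              rw [hsp] at hx1
              have hc : c.val = a.val := configLE_antisymm c.2 a.2 (he c.val c.2) hx1
              exact Or.inl (congrArg (fun z => glue z _) (congrArg some (Subtype.ext hc)))

end HasseAux


/-- The Hasse digraph of the lattice of root ancestral configurations of
`S = node l r` is isomorphic to the cartesian product of digraphs
`D̂(S_ℓ) □ D̂(S_r)`: there is a bijection of vertex sets under which `Y` covers `X`
in `D(S)` iff the images are joined by an edge of the cartesian product. -/
theorem hasse_digraph_decomposition (l r : BTree) :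
    ∃ e : {A : Finset Pos // IsConfig (node l r) A} ≃
        Option {A : Finset Pos // IsConfig l A} ×
        Option {A : Finset Pos // IsConfig r A},
      ∀ X Y, Covers (node l r) X.val Y.val ↔
        (((e X).1 = (e Y).1 ∧ hatEdge r (e X).2 (e Y).2) ∨
         ((e X).2 = (e Y).2 ∧ hatEdge l (e X).1 (e Y).1)) := by
  refine ⟨{ toFun := fun A => (HasseAux.split false A, HasseAux.split true A)
            invFun := fun z => ⟨HasseAux.glue z.1 z.2, HasseAux.glue_isConfig z.1 z.2⟩
            left_inv := fun A => Subtype.ext (HasseAux.glue_split A)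
            right_inv := fun z => Prod.ext (HasseAux.split_glue z.1 z.2 false)
              (HasseAux.split_glue z.1 z.2 true) }, ?_⟩
  intro X Y
  have hX : X.val = HasseAux.glue (HasseAux.split false X) (HasseAux.split true X) :=
    (HasseAux.glue_split X).symm
  have hY : Y.val = HasseAux.glue (HasseAux.split false Y) (HasseAux.split true Y) :=
    (HasseAux.glue_split Y).symm
  rw [hX, hY]
  exact HasseAux.covers_glue_iff _ _ _ _
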